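/- Every infinite Hausdorff (T₂) topological space has an infinite subset whose subspace topology is discrete. -/

import Mathlib

open Set

lemma key_step {X : Type*} [TopologicalSpace X] [T2Space X] {U : Set X}
    (hUo : IsOpen U) (hUi : U.Infinite) :
    ∃ x V W, x ∈ V ∧ IsOpen V ∧ V ⊆ U ∧ IsOpen W ∧ W ⊆ U ∧ W.Infinite ∧ Disjoint V W := by
  by_cases h : ∃ x ∈ U, ∃ V, IsOpen V ∧ V ∩ U = {x}
  · obtain ⟨x, hxU, V, hVo, hVU⟩ := h
    refine ⟨x, V ∩ U, U \ {x}, ?_, hVo.inter hUo, inter_subset_right,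
      hUo.sdiff (isClosed_singleton), diff_subset, hUi.diff (finite_singleton x), ?_⟩
    · rw [hVU]; rfl
    · rw [hVU]
      exact disjoint_left.mpr (by rintro a rfl ⟨_, ha⟩; exact ha rfl)
  · -- every nonempty open subset of U is infinite
    have claim : ∀ O : Set X, IsOpen O → O ⊆ U → O.Nonempty → O.Infinite := by
      intro O hOo hOU ⟨x, hxO⟩
      by_contra hfin
      rw [Set.not_infinite] at hfin
      refine h ⟨x, hOU hxO, O \ (O \ {x}), hOo.sdiff ((hfin.diff (t := {x})).isClosed), ?_⟩
      have : O \ (O \ {x}) = {x} := by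
        ext a; simp only [mem_diff, mem_singleton_iff]
        constructor
        · rintro ⟨haO, ha⟩; by_contra hax; exact ha ⟨haO, hax⟩
        · rintro rfl; exact ⟨hxO, fun ⟨_, h'⟩ => h' rfl⟩
      rw [this, inter_eq_left]
      exact singleton_subset_iff.mpr (hOU hxO)
    obtain ⟨a, haU, b, hbU, hab⟩ := hUi.nontrivial
    obtain ⟨A, B, hAo, hBo, haA, hbB, hAB⟩ := t2_separation hab
    exact ⟨a, U ∩ A, U ∩ B, ⟨haU, haA⟩, hUo.inter hAo, inter_subset_left,
      hUo.inter hBo, inter_subset_left,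
      claim _ (hUo.inter hBo) inter_subset_left ⟨b, hbU, hbB⟩,
      (hAB.mono inter_subset_right inter_subset_right)⟩

/-- Every infinite Hausdorff (T₂) topological space has an infinite subset whose
subspace topology is discrete. -/
theorem hausdorff_has_infinite_discrete_subspace
    {X : Type*} [TopologicalSpace X] [T2Space X] [Infinite X] :
    ∃ Y : Set X, Y.Infinite ∧ DiscreteTopology Y := by
  classical
  let S := {U : Set X // IsOpen U ∧ U.Infinite}
  have hkey : ∀ U : S, ∃ x V W, x ∈ V ∧ IsOpen V ∧ V ⊆ U.1 ∧ IsOpen W ∧ W ⊆ U.1 ∧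
      W.Infinite ∧ Disjoint V W := fun U => key_step U.2.1 U.2.2
  choose px pV pW hxV hVo hVU hWo hWU hWi hVW using hkey
  let step : S → S := fun U => ⟨pW U, hWo U, hWi U⟩
  let u : ℕ → S := fun n => step^[n] ⟨Set.univ, isOpen_univ, Set.infinite_univ⟩
  have hu : ∀ n, u (n + 1) = step (u n) := fun n => Function.iterate_succ_apply' _ _ _
  have hmono : ∀ n m, n ≤ m → (u m).1 ⊆ (u n).1 := by
    intro n m hnm
    induction m with
    | zero => simp_all
    | succ k ih =>
      rcases Nat.lt_or_ge n (k+1) with h | h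
      · refine subset_trans ?_ (ih (Nat.lt_succ_iff.mp h))
        rw [hu k]; exact hWU (u k)
      · have : n = k + 1 := le_antisymm hnm h
        subst this; rfl
  set x : ℕ → X := fun n => px (u n) with hx
  set V : ℕ → Set X := fun n => pV (u n) with hV
  have hxVn : ∀ n, x n ∈ V n := fun n => hxV (u n)
  have hsep : ∀ n m, n ≠ m → x n ∉ V m := by
    intro n m hnm hmem
    rcases Nat.lt_or_gt_of_ne hnm with h | h
    · -- n < m : V m ⊆ u m ⊆ u (n+1) = W (u n), disjoint from V n ∋ x n
      have : x n ∈ pW (u n) := by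
        have h1 : V m ⊆ (u m).1 := hVU (u m)
        have h2 : (u m).1 ⊆ (u (n+1)).1 := hmono _ _ h
        have : (u (n+1)).1 = pW (u n) := by rw [hu n]
        exact this ▸ (h2 (h1 hmem))
      exact (hVW (u n)).ne_of_mem (hxVn n) this rfl
    · -- m < n : x n ∈ u n ⊆ u (m+1) = W (u m), disjoint from V m
      have : x n ∈ pW (u m) := by
        have h1 : x n ∈ (u n).1 := hVU (u n) (hxVn n)
        have h2 : (u n).1 ⊆ (u (m+1)).1 := hmono _ _ h
        have h3 : (u (m+1)).1 = pW (u m) := by rw [hu m]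
        exact h3 ▸ h2 h1
      exact (hVW (u m)).ne_of_mem hmem this rfl
  have hinj : Function.Injective x := by
    intro n m hnm
    by_contra h
    exact hsep n m h (hnm ▸ hxVn m)
  refine ⟨Set.range x, Set.infinite_range_of_injective hinj, ?_⟩
  rw [discreteTopology_iff_isOpen_singleton]
  rintro ⟨y, n, rfl⟩
  have : {(⟨x n, n, rfl⟩ : Set.range x)} =
      Subtype.val ⁻¹' (V n) := by
    ext ⟨z, m, rfl⟩
    simp only [Set.mem_singleton_iff, Set.mem_preimage, Subtype.mk.injEq]
    constructor
    · rintro h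
      rw [show x m = x n from congrArg Subtype.val h]; exact hxVn n
    · intro hz
      by_contra hne
      exact hsep m n (fun e => hne (by simp [e])) hz
  rw [this]
  exact (hVo (u n)).preimage continuous_subtype_val
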